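/- arXiv:1308.3417 — 4 statements merged into one kernel-verified Lean document; each statement's English description precedes it below -/
import Mathlib

section
/- The principal congruence subgroup Γ(2) of SL(2,ℤ) equals the subgroup of SL(2,ℤ) generated by the three matrices T² = [[1,2],[0,1]], S·T²·S = [[-1,0],[2,-1]], and -I. -/
open Matrix MatrixGroups CongruenceSubgroup

namespace GammaTwoClosureAux

open ModularGroup Matrix.SpecialLinearGroup Subgroup

/-- The subgroup generated by the three matrices. -/
def Hgrp : Subgroup SL(2, ℤ) := Subgroup.closure
      ({ModularGroup.T ^ 2, ModularGroup.S * ModularGroup.T ^ 2 * ModularGroup.S, -1} :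
        Set SL(2, ℤ))

lemma memT2 : T ^ 2 ∈ Hgrp := subset_closure (by simp)
lemma memSTS : S * T ^ 2 * S ∈ Hgrp := subset_closure (by simp)
lemma memNeg : (-1 : SL(2,ℤ)) ∈ Hgrp := subset_closure (by simp)

lemma S_sq : (S : SL(2,ℤ)) * S = -1 := Subtype.ext (by
  rw [Matrix.SpecialLinearGroup.coe_mul]
  show (S : Matrix (Fin 2) (Fin 2) ℤ) * S = ((-1 : SL(2,ℤ)) : Matrix (Fin 2) (Fin 2) ℤ)
  rw [S_mul_S_eq]
  simp)

lemma S_inv : (S : SL(2,ℤ))⁻¹ = -S := by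
  have : (S : SL(2,ℤ)) * (-S) = 1 := by rw [mul_neg, S_sq]; simp
  exact inv_eq_of_mul_eq_one_right this

lemma memTpow (m : ℤ) : T ^ (2*m) ∈ Hgrp := by
  have h : T ^ (2*m) = (T ^ 2) ^ m := by
    rw [← zpow_natCast T 2, ← _root_.zpow_mul]; norm_num
  rw [h]
  exact zpow_mem memT2 m

/-- The element `S * T^(2m) * S⁻¹`, whose matrix is `[[1,0],[-2m,1]]`. -/
def V (m : ℤ) : SL(2,ℤ) := S * T ^ (2*m) * S⁻¹

lemma memV (m : ℤ) : V m ∈ Hgrp := by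
  have h : V m = (S * T ^ 2 * S⁻¹) ^ m := by
    rw [conj_zpow, V, ← zpow_natCast T 2, ← _root_.zpow_mul]; norm_num
  have h2 : S * T ^ 2 * S⁻¹ ∈ Hgrp := by
    rw [S_inv]
    have : S * T ^ 2 * (-S) = (S * T ^ 2 * S) * (-1) := by
      rw [mul_neg, mul_neg, mul_one]
    rw [this]
    exact mul_mem memSTS memNeg
  rw [h]
  exact zpow_mem h2 m

lemma coe_V (m : ℤ) : (V m).1 = !![1, 0; -(2*m), 1] := by
  have hsi : ((S⁻¹ : SL(2,ℤ)) : Matrix (Fin 2) (Fin 2) ℤ) = !![0, 1; -1, 0] := by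
    rw [S_inv, coe_neg, coe_S]
    ext i j
    fin_cases i <;> fin_cases j <;> simp
  rw [V, Matrix.SpecialLinearGroup.coe_mul, Matrix.SpecialLinearGroup.coe_mul, coe_T_zpow, coe_S, hsi]
  ext i j
  fin_cases i <;> fin_cases j <;>
    simp [Matrix.mul_apply, Fin.sum_univ_succ]

lemma TGamma (m : ℤ) : T ^ (2*m) ∈ Gamma 2 := by
  rw [Gamma_mem]
  have h := coe_T_zpow (2*m)
  refine ⟨?_, ?_, ?_, ?_⟩ <;>
    · show ((_ : SL(2,ℤ)).1 _ _ : ZMod 2) = _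
      rw [h]
      simp
      try exact Or.inl (by decide)

lemma VGamma (m : ℤ) : V m ∈ Gamma 2 := by
  rw [Gamma_mem]
  have h := coe_V m
  refine ⟨?_, ?_, ?_, ?_⟩ <;>
    · show ((_ : SL(2,ℤ)).1 _ _ : ZMod 2) = _
      rw [h]
      simp
      try exact Or.inl (by decide)

lemma T_mul_entries (k : ℤ) (A : SL(2,ℤ)) :
    (T ^ (2*k) * A).1 0 0 = A.1 0 0 + 2*k*(A.1 1 0) ∧ (T ^ (2*k) * A).1 1 0 = A.1 1 0 := by
  rw [Matrix.SpecialLinearGroup.coe_mul, coe_T_zpow]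
  constructor <;>
    · simp [Matrix.mul_apply, Fin.sum_univ_succ]
      try ring

lemma V_mul_entries (m : ℤ) (A : SL(2,ℤ)) :
    (V m * A).1 0 0 = A.1 0 0 ∧ (V m * A).1 1 0 = A.1 1 0 - 2*m*(A.1 0 0) := by
  rw [Matrix.SpecialLinearGroup.coe_mul, coe_V]
  constructor <;>
    · simp [Matrix.mul_apply, Fin.sum_univ_succ]
      try ring

/-- arithmetic reduction lemma, positive modulus case -/
lemma exists_red_pos (x y : ℤ) (hy : 0 < y) (hp : ¬ (2:ℤ) ∣ (x - y)) :
    ∃ k : ℤ, (x + 2*k*y).natAbs < y.natAbs := by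
  set q := x / (2*y) with hq
  set r := x % (2*y) with hr
  have h2y : (0:ℤ) < 2*y := by omega
  have hd : r = x - 2*y*q := by rw [hr, hq]; exact Int.emod_def x (2*y)
  have h0 : 0 ≤ r := Int.emod_nonneg x (by omega)
  have h1 : r < 2*y := Int.emod_lt_of_pos x h2y
  have hxr : (2:ℤ) ∣ (x - r) := ⟨y*q, by rw [hd]; ring⟩
  have hne : r ≠ y := fun h => hp (h ▸ hxr)
  by_cases hlt : r < y
  · refine ⟨-q, ?_⟩
    have hv : x + 2*(-q)*y = r := by rw [hd]; ring
    rw [hv]; omega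
  · refine ⟨-q - 1, ?_⟩
    have hv : x + 2*(-q-1)*y = r - 2*y := by rw [hd]; ring
    rw [hv]; omega

lemma exists_red (x y : ℤ) (hy : y ≠ 0) (hp : ¬ (2:ℤ) ∣ (x - y)) :
    ∃ k : ℤ, (x + 2*k*y).natAbs < y.natAbs := by
  rcases hy.lt_or_gt with hneg | hpos
  · obtain ⟨k, hk⟩ := exists_red_pos x (-y) (by omega) (by omega)
    refine ⟨-k, ?_⟩
    have hv : x + 2*(-k)*y = x + 2*k*(-y) := by ring
    rw [hv]
    omega
  · exact exists_red_pos x y hpos hp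

lemma int_parity {z : ℤ} (h : ((z : ZMod 2) = 0)) : (2:ℤ) ∣ z := by
  exact (ZMod.intCast_zmod_eq_zero_iff_dvd z 2).mp h

lemma int_odd {z : ℤ} (h : ((z : ZMod 2) = 1)) : ¬ (2:ℤ) ∣ z := by
  intro hd
  rw [(ZMod.intCast_zmod_eq_zero_iff_dvd z 2).mpr hd] at h
  exact absurd h (by decide)

lemma key : ∀ n : ℕ, ∀ A : SL(2,ℤ), A ∈ Gamma 2 →
    (A.1 0 0).natAbs + (A.1 1 0).natAbs ≤ n → A ∈ Hgrp := by
  intro n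
  induction n with
  | zero =>
    intro A hA hle
    exfalso
    have hdet : A.1.det = 1 := A.2
    rw [Matrix.det_fin_two] at hdet
    have h00 : A.1 0 0 = 0 := by omega
    have h10 : A.1 1 0 = 0 := by omega
    rw [h00, h10] at hdet
    omega
  | succ n ih =>
    intro A hA hle
    have hdet : A.1.det = 1 := A.2
    rw [Matrix.det_fin_two] at hdet
    obtain ⟨ha, hb, hc, hd⟩ := Gamma_mem.mp hA
    have hodd : ¬ (2:ℤ) ∣ A.1 0 0 := int_odd ha
    have hbev : (2:ℤ) ∣ A.1 0 1 := int_parity hb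
    have hcev : (2:ℤ) ∣ A.1 1 0 := int_parity hc
    by_cases hc0 : A.1 1 0 = 0
    · -- c = 0 : A = ± a translation matrix
      rw [hc0, mul_zero, sub_zero] at hdet
      obtain ⟨m, hm⟩ := hbev
      rcases Int.mul_eq_one_iff_eq_one_or_neg_one.mp hdet with ⟨ha1, hd1⟩ | ⟨ha1, hd1⟩
      · have hAeq : A = T ^ (2*m) := Subtype.ext (by
          rw [coe_T_zpow]
          ext i j
          fin_cases i <;> fin_cases j <;> simp [ha1, hm, hc0, hd1])
        rw [hAeq]
        exact memTpow m
      · have hAeq : A = -(T ^ (2*(-m))) := Subtype.ext (by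
          rw [coe_neg, coe_T_zpow]
          ext i j
          fin_cases i <;> fin_cases j <;> simp [ha1, hm, hc0, hd1])
        rw [hAeq, show -(T ^ (2*(-m))) = (-1 : SL(2,ℤ)) * T ^ (2*(-m)) from (neg_one_mul _).symm]
        exact mul_mem memNeg (memTpow (-m))
    · have ha0 : A.1 0 0 ≠ 0 := fun h => hodd (by rw [h]; exact dvd_zero 2)
      rcases Nat.lt_trichotomy (A.1 0 0).natAbs (A.1 1 0).natAbs with hlt | heq | hgt
      · -- |a| < |c| : reduce c
        obtain ⟨m, hm⟩ := exists_red (A.1 1 0) (A.1 0 0) ha0 (by omega)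
        set B := V (-m) * A with hB
        obtain ⟨hB00, hB10⟩ := V_mul_entries (-m) A
        rw [← hB] at hB00 hB10
        have hB10' : B.1 1 0 = A.1 1 0 + 2*m*(A.1 0 0) := by rw [hB10]; ring
        have hBG : B ∈ Gamma 2 := mul_mem (VGamma (-m)) hA
        have hmeas : (B.1 0 0).natAbs + (B.1 1 0).natAbs ≤ n := by
          rw [hB00, hB10']; omega
        have hBH : B ∈ Hgrp := ih B hBG hmeas
        have : A = (V (-m))⁻¹ * B := by rw [hB]; group
        rw [this]
        exact mul_mem (inv_mem (memV (-m))) hBH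
      · exfalso
        rcases Int.natAbs_eq_natAbs_iff.mp heq with h | h <;> omega
      · -- |c| < |a| : reduce a
        obtain ⟨k, hk⟩ := exists_red (A.1 0 0) (A.1 1 0) hc0 (by omega)
        set B := T ^ (2*k) * A with hB
        obtain ⟨hB00, hB10⟩ := T_mul_entries k A
        rw [← hB] at hB00 hB10
        have hB00' : B.1 0 0 = A.1 0 0 + 2*k*(A.1 1 0) := hB00
        have hBG : B ∈ Gamma 2 := mul_mem (TGamma k) hA
        have hmeas : (B.1 0 0).natAbs + (B.1 1 0).natAbs ≤ n := by
          rw [hB00', hB10]; omega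
        have hBH : B ∈ Hgrp := ih B hBG hmeas
        have : A = (T ^ (2*k))⁻¹ * B := by rw [hB]; group
        rw [this]
        exact mul_mem (inv_mem (memTpow k)) hBH


lemma negOneGamma : (-1 : SL(2,ℤ)) ∈ Gamma 2 := by
  rw [Gamma_mem]
  refine ⟨?_, ?_, ?_, ?_⟩ <;>
    · show ((((-1 : SL(2,ℤ)).1 _ _ : ℤ)) : ZMod 2) = _
      rw [coe_neg, Matrix.SpecialLinearGroup.coe_one]
      simp
      try decide

lemma T2Gamma : (T : SL(2,ℤ)) ^ 2 ∈ Gamma 2 := by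
  have h : (T : SL(2,ℤ)) ^ (2:ℕ) = T ^ ((2*1 : ℤ)) := by
    rw [← zpow_natCast]; norm_num
  rw [h]
  exact TGamma 1

lemma STSGamma : S * T ^ 2 * S ∈ Gamma 2 := by
  have h : S * T ^ 2 * S = (-1 : SL(2,ℤ)) * V 1 := by
    rw [V, S_inv]
    have h2 : (T : SL(2,ℤ)) ^ ((2*1 : ℤ)) = T ^ (2:ℕ) := by
      rw [← zpow_natCast]; norm_num
    rw [h2, mul_neg, neg_one_mul, neg_neg]
  rw [h]
  exact mul_mem negOneGamma (VGamma 1)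

end GammaTwoClosureAux

open GammaTwoClosureAux in
/-- The principal congruence subgroup `Γ(2)` of `SL(2,ℤ)` is generated by
`T² = [[1,2],[0,1]]`, `S·T²·S = [[-1,0],[2,-1]]` and `-I`. -/
theorem Gamma_two_eq_closure :
    Gamma 2 = Subgroup.closure
      ({ModularGroup.T ^ 2, ModularGroup.S * ModularGroup.T ^ 2 * ModularGroup.S, -1} :
        Set SL(2, ℤ)) := by
  apply le_antisymm
  · intro A hA
    exact key ((A.1 0 0).natAbs + (A.1 1 0).natAbs) A hA le_rfl
  · rw [Subgroup.closure_le]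
    rintro x hx
    simp only [Set.mem_insert_iff, Set.mem_singleton_iff] at hx
    rcases hx with rfl | rfl | rfl
    · exact T2Gamma
    · exact STSGamma
    · exact negOneGamma
end

section
/- Let k be an even positive integer, let χ : SL(2,ℤ) → ℂˣ be the unique group homomorphism with χ(S) = χ(T) = -1, let f : ℍ → ℂ be any function, and define g : ℍ → ℂ by g(τ) = f(2τ). Then f∣[k]γ = χ(γ)·f for all γ ∈ SL(2,ℤ) if and only if the following three conditions hold: g∣[k]γ = g for all γ ∈ Γ₀(4), g∣[k]W₄ = -g, and g∣[k]T_{1/2} = -g. -/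
open UpperHalfPlane Matrix MatrixGroups CongruenceSubgroup

noncomputable section

/-- An element of `GL(2,ℝ)⁺` built from a 2×2 real matrix of positive determinant. -/
def mkGLPos (M : Matrix (Fin 2) (Fin 2) ℝ) (h : 0 < M.det) : GL(2, ℝ)⁺ :=
  ⟨Matrix.GeneralLinearGroup.mkOfDetNeZero M h.ne', by
    simpa [Matrix.mem_glpos, Matrix.GeneralLinearGroup.val_det_apply,
      Matrix.GeneralLinearGroup.mkOfDetNeZero] using h⟩

set_option synthInstance.maxHeartbeats 400000 in
/-- The weight-`k` slash operator with the classical normalization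
`(f ∣[k] A)(τ) = det(A)^(k/2) · (cτ+d)^(-k) · f(Aτ)`. -/
def wtSlash (k : ℤ) (A : GL(2, ℝ)⁺) (f : ℍ → ℂ) : ℍ → ℂ := fun τ =>
  ((((A : GL (Fin 2) ℝ) : Matrix (Fin 2) (Fin 2) ℝ).det ^ ((k : ℝ) / 2) : ℝ) : ℂ) *
    (UpperHalfPlane.denom A τ) ^ (-k) * f (A • τ)

/-- The image of an integral special linear matrix in `GL(2,ℝ)⁺`. -/
def toGL (γ : SL(2, ℤ)) : GL(2, ℝ)⁺ :=
  Matrix.SpecialLinearGroup.toGLPos (γ.map (Int.castRingHom ℝ))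

/-- `W₄ = [[0,-1],[4,0]]` as an element of `GL(2,ℝ)⁺`. -/
def W4 : GL(2, ℝ)⁺ := mkGLPos !![0, -1; 4, 0] (by norm_num [Matrix.det_fin_two_of])

/-- `T_{1/2} = [[1,1/2],[0,1]]` as an element of `GL(2,ℝ)⁺`. -/
def Thalf : GL(2, ℝ)⁺ := mkGLPos !![1, 1/2; 0, 1] (by norm_num [Matrix.det_fin_two_of])

/-- The map `τ ↦ 2τ` on the upper half-plane. -/
def double (τ : ℍ) : ℍ := ⟨2 * (τ : ℂ), by simpa [Complex.mul_im] using τ.2⟩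


set_option synthInstance.maxHeartbeats 1000000
set_option maxHeartbeats 1000000

def Dmat : GL(2, ℝ)⁺ := mkGLPos !![2, 0; 0, 1] (by norm_num [Matrix.det_fin_two_of])
def twoI : GL(2, ℝ)⁺ := mkGLPos !![2, 0; 0, 2] (by norm_num [Matrix.det_fin_two_of])

lemma coe_mkGLPos (M : Matrix (Fin 2) (Fin 2) ℝ) (h : 0 < M.det) :
    (((mkGLPos M h : GL (Fin 2) ℝ)) : Matrix (Fin 2) (Fin 2) ℝ) = M := rfl

lemma det_pos' (A : GL(2, ℝ)⁺) : 0 < ((A : GL (Fin 2) ℝ) : Matrix (Fin 2) (Fin 2) ℝ).det :=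
  A.2

lemma wtSlash_mul (k : ℤ) (A B : GL(2, ℝ)⁺) (f : ℍ → ℂ) :
    wtSlash k (A * B) f = wtSlash k B (wtSlash k A f) := by
  funext τ
  simp only [wtSlash]
  rw [mul_smul, show denom ((A * B : GL(2, ℝ)⁺) : GL (Fin 2) ℝ) τ = denom (A : GL (Fin 2) ℝ)
      (num B τ / denom B τ) * denom B τ from denom_cocycle _ _ τ.im_ne_zero]
  have hdet : (((A * B : GL(2, ℝ)⁺) : GL (Fin 2) ℝ) : Matrix (Fin 2) (Fin 2) ℝ).det
      = ((A : GL (Fin 2) ℝ) : Matrix (Fin 2) (Fin 2) ℝ).det *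
        ((B : GL (Fin 2) ℝ) : Matrix (Fin 2) (Fin 2) ℝ).det := by
    simp [Units.val_mul]
  rw [hdet, Real.mul_rpow (det_pos' A).le (det_pos' B).le, mul_zpow]
  have hs : denom A (num B τ / denom B τ) = denom A ((B • τ : ℍ) : ℂ) := by
    rw [Subgroup.smul_def, coe_smul_of_det_pos (det_pos' _)]
  rw [hs]
  push_cast
  ring

lemma wtSlash_one (k : ℤ) (f : ℍ → ℂ) : wtSlash k 1 f = f := by
  funext τ
  simp [wtSlash, denom_one]

lemma wtSlash_smul (k : ℤ) (A : GL(2, ℝ)⁺) (c : ℂ) (f : ℍ → ℂ) :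
    wtSlash k A (c • f) = c • wtSlash k A f := by
  funext τ
  simp only [wtSlash, Pi.smul_apply, smul_eq_mul]
  ring

lemma wtSlash_neg (k : ℤ) (A : GL(2, ℝ)⁺) (f : ℍ → ℂ) :
    wtSlash k A (-f) = -wtSlash k A f := by
  funext τ
  simp only [wtSlash, Pi.neg_apply]
  ring

lemma wtSlash_injective (k : ℤ) (A : GL(2, ℝ)⁺) (f f' : ℍ → ℂ)
    (h : wtSlash k A f = wtSlash k A f') : f = f' := by
  have h1 : ∀ h : ℍ → ℂ, wtSlash k A⁻¹ (wtSlash k A h) = h := by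
    intro h
    rw [← wtSlash_mul, mul_inv_cancel, wtSlash_one]
  rw [← h1 f, ← h1 f', h]

lemma coe_toGL (γ : SL(2, ℤ)) :
    (((toGL γ : GL (Fin 2) ℝ)) : Matrix (Fin 2) (Fin 2) ℝ) =
      (γ : Matrix (Fin 2) (Fin 2) ℤ).map (Int.cast : ℤ → ℝ) := rfl

lemma GLPos_ext {A B : GL(2, ℝ)⁺}
    (h : ((A : GL (Fin 2) ℝ) : Matrix (Fin 2) (Fin 2) ℝ) =
         ((B : GL (Fin 2) ℝ) : Matrix (Fin 2) (Fin 2) ℝ)) : A = B :=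
  Subtype.ext (Units.ext h)

lemma Dmat_smul (τ : ℍ) : Dmat • τ = double τ := by
  apply UpperHalfPlane.ext
  rw [Subgroup.smul_def, coe_smul_of_det_pos (det_pos' _)]
  simp [num, denom, Dmat, coe_mkGLPos, double]


lemma wtSlash_Dmat (k : ℤ) (f : ℍ → ℂ) :
    wtSlash k Dmat f = ((((2:ℝ) ^ ((k:ℝ)/2) : ℝ) : ℂ)) • fun τ => f (double τ) := by
  funext τ
  have hden : denom Dmat τ = 1 := by
    simp [denom, Dmat, coe_mkGLPos]
  have hdet : ((Dmat : GL (Fin 2) ℝ) : Matrix (Fin 2) (Fin 2) ℝ).det = 2 := by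
    simp [Dmat, coe_mkGLPos, Matrix.det_fin_two_of]
  simp [wtSlash, Dmat_smul, hden, hdet]

lemma wtSlash_twoI (k : ℤ) (f : ℍ → ℂ) : wtSlash k twoI f = f := by
  funext τ
  have hsm : twoI • τ = τ := by
    apply UpperHalfPlane.ext
    rw [Subgroup.smul_def, coe_smul_of_det_pos (det_pos' _)]
    have h0 : num twoI τ = 2 * τ := by simp [num, twoI, coe_mkGLPos]
    have h1 : denom twoI τ = 2 := by simp [denom, twoI, coe_mkGLPos]
    rw [h0, h1, mul_div_cancel_left₀ _ (two_ne_zero)]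
  have hden : denom twoI τ = 2 := by
    simp [denom, twoI, coe_mkGLPos]
  have hdet : ((twoI : GL (Fin 2) ℝ) : Matrix (Fin 2) (Fin 2) ℝ).det = 4 := by
    norm_num [twoI, coe_mkGLPos, Matrix.det_fin_two_of]
  have h4 : ((4:ℝ)) ^ ((k:ℝ)/2) = (2:ℝ)^k := by
    rw [show (4:ℝ) = 2 ^ (2:ℝ) by
        rw [show (2:ℝ) = ((2:ℕ):ℝ) by norm_num, Real.rpow_natCast]; norm_num,
      ← Real.rpow_mul (by norm_num)]
    rw [show (2:ℝ) * ((k:ℝ)/2) = (k:ℝ) by ring, Real.rpow_intCast]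
  simp only [wtSlash, hsm, hden, hdet, h4]
  push_cast
  rw [_root_.zpow_neg, mul_inv_cancel₀ (zpow_ne_zero _ (by norm_num : (2:ℂ) ≠ 0)), one_mul]

lemma rel_W4 : Dmat * W4 = toGL ModularGroup.S * Dmat * twoI := by
  apply GLPos_ext
  simp only [Units.val_mul, Subgroup.coe_mul, coe_mkGLPos, coe_toGL, Dmat, W4, twoI,
    ModularGroup.coe_S]
  ext i j
  fin_cases i <;> fin_cases j <;>
    simp [Matrix.mul_apply, Fin.sum_univ_succ, Matrix.map_apply] <;> norm_num

lemma rel_Thalf : Dmat * Thalf = toGL ModularGroup.T * Dmat := by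
  apply GLPos_ext
  simp only [Units.val_mul, Subgroup.coe_mul, coe_mkGLPos, coe_toGL, Dmat, Thalf,
    ModularGroup.coe_T]
  ext i j
  fin_cases i <;> fin_cases j <;>
    simp [Matrix.mul_apply, Fin.sum_univ_succ, Matrix.map_apply] <;> norm_num


lemma natAbs_emod_lt' (a b : ℤ) (h : b ≠ 0) : (a % b).natAbs < b.natAbs := by
  have h1 := Int.emod_nonneg a h
  have h2 := Int.emod_lt a h
  omega

lemma closure_S_T :
    Subgroup.closure ({ModularGroup.S, ModularGroup.T} : Set SL(2,ℤ)) = ⊤ := by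
  set K := Subgroup.closure ({ModularGroup.S, ModularGroup.T} : Set SL(2,ℤ)) with hK
  have hSK : ModularGroup.S ∈ K := Subgroup.subset_closure (by simp)
  have hTK : ModularGroup.T ∈ K := Subgroup.subset_closure (by simp)
  have hTz : ∀ n : ℤ, ModularGroup.T ^ n ∈ K := fun n => zpow_mem hTK n
  rw [eq_top_iff]
  intro γ _
  suffices H : ∀ n : ℕ, ∀ γ : SL(2,ℤ), (γ 1 0).natAbs = n → γ ∈ K from H _ γ rfl
  intro n
  induction n using Nat.strong_induction_on with
  | _ n ih =>
    intro γ hn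
    by_cases hc : γ 1 0 = 0
    · have hdet : γ 0 0 * γ 1 1 - γ 0 1 * γ 1 0 = 1 := by
        have := γ.prop
        rwa [Matrix.det_fin_two] at this
      rw [hc, mul_zero, sub_zero] at hdet
      rcases Int.mul_eq_one_iff_eq_one_or_neg_one.mp hdet with ⟨h1, h2⟩ | ⟨h1, h2⟩
      · have hγ : γ = ModularGroup.T ^ (γ 0 1) := by
          apply Subtype.ext
          rw [ModularGroup.coe_T_zpow]
          rw [Matrix.eta_fin_two ((γ : SL(2,ℤ)) : Matrix (Fin 2) (Fin 2) ℤ), h1, h2, hc]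
          simp
        rw [hγ]; exact hTz _
      · have hγ : γ = ModularGroup.S * ModularGroup.S * ModularGroup.T ^ (-(γ 0 1)) := by
          apply Subtype.ext
          rw [Matrix.SpecialLinearGroup.coe_mul, Matrix.SpecialLinearGroup.coe_mul,
            ModularGroup.S_mul_S_eq, ModularGroup.coe_T_zpow,
            Matrix.eta_fin_two ((γ : SL(2,ℤ)) : Matrix (Fin 2) (Fin 2) ℤ), h1, h2, hc]
          ext i j
          fin_cases i <;> fin_cases j <;> simp
        rw [hγ]
        exact mul_mem (mul_mem hSK hSK) (hTz _)
    · set c := γ 1 0 with hc'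
      set a := γ 0 0 with ha'
      set q := a / c with hq
      set γ₂ := ModularGroup.S * (ModularGroup.T ^ (-q) * γ) with hγ₂
      have hent : γ₂ 1 0 = a % c := by
        have h1 : (ModularGroup.T ^ (-q) * γ) 0 0 = a + (-q) * c := by
          have : ((ModularGroup.T ^ (-q) * γ : SL(2,ℤ)) : Matrix (Fin 2) (Fin 2) ℤ)
              = !![1, -q; 0, 1] * (γ : Matrix (Fin 2) (Fin 2) ℤ) := by
            rw [Matrix.SpecialLinearGroup.coe_mul, ModularGroup.coe_T_zpow]
          show ((ModularGroup.T ^ (-q) * γ : SL(2,ℤ)) : Matrix (Fin 2) (Fin 2) ℤ) 0 0 = _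
          rw [this]
          simp [Matrix.mul_apply, Fin.sum_univ_succ]
          rfl
        have h2 : ((γ₂ : SL(2,ℤ)) : Matrix (Fin 2) (Fin 2) ℤ) 1 0
            = ((ModularGroup.T ^ (-q) * γ : SL(2,ℤ)) : Matrix (Fin 2) (Fin 2) ℤ) 0 0 := by
          rw [hγ₂, Matrix.SpecialLinearGroup.coe_mul, ModularGroup.coe_S]
          simp [Matrix.mul_apply, Fin.sum_univ_succ]
        show ((γ₂ : SL(2,ℤ)) : Matrix (Fin 2) (Fin 2) ℤ) 1 0 = a % c
        rw [h2, h1, Int.emod_def]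
        ring
      have hlt : (γ₂ 1 0).natAbs < n := by
        rw [hent, ← hn]
        exact natAbs_emod_lt' a c hc
      have hmem : γ₂ ∈ K := ih _ hlt γ₂ rfl
      have : γ = (ModularGroup.T ^ (-q))⁻¹ * (ModularGroup.S⁻¹ * γ₂) := by
        rw [hγ₂]; group
      rw [this]
      exact mul_mem (inv_mem (hTz _)) (mul_mem (inv_mem hSK) hmem)

instance : DecidableEq (Matrix.SpecialLinearGroup (Fin 2) (ZMod 2)) :=
  fun a b => decidable_of_iff (a.1 = b.1) Subtype.ext_iff.symm

def sgnZ : Matrix.SpecialLinearGroup (Fin 2) (ZMod 2) →* ℤˣ where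
  toFun A := if A ^ 3 = 1 then 1 else -1
  map_one' := by decide
  map_mul' := by decide

def pi2 : SL(2,ℤ) →* Matrix.SpecialLinearGroup (Fin 2) (ZMod 2) :=
  Matrix.SpecialLinearGroup.map (Int.castRingHom (ZMod 2))

lemma sgnZ_pi2_S : sgnZ (pi2 ModularGroup.S) = -1 := by decide
lemma sgnZ_pi2_T : sgnZ (pi2 ModularGroup.T) = -1 := by decide

/-- The character is determined: it equals the sign character mod 2. -/
lemma chi_eq (χ : SL(2, ℤ) →* ℂˣ) (hS : (χ ModularGroup.S : ℂ) = -1)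
    (hT : (χ ModularGroup.T : ℂ) = -1) (γ : SL(2,ℤ)) :
    (χ γ : ℂ) = ((sgnZ (pi2 γ) : ℤ) : ℂ) := by
  set χ' : SL(2, ℤ) →* ℂˣ :=
    (Units.map (Int.castRingHom ℂ).toMonoidHom).comp (sgnZ.comp pi2) with hχ'
  have hval : ∀ δ : SL(2,ℤ), (χ' δ : ℂ) = ((sgnZ (pi2 δ) : ℤ) : ℂ) := by
    intro δ; rfl
  have heq : Set.EqOn χ χ' ({ModularGroup.S, ModularGroup.T} : Set SL(2,ℤ)) := by
    rintro x (rfl | rfl)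
    · apply Units.ext
      rw [hS, hval, sgnZ_pi2_S]
      norm_num
    · apply Units.ext
      rw [hT, hval, sgnZ_pi2_T]
      norm_num
  have : χ γ = χ' γ := by
    have := MonoidHom.eqOn_closure heq
    exact this (by rw [closure_S_T]; trivial)
  rw [this, hval]

lemma chi_one_of_mod2 (χ : SL(2, ℤ) →* ℂˣ) (hS : (χ ModularGroup.S : ℂ) = -1)
    (hT : (χ ModularGroup.T : ℂ) = -1) (γ : SL(2,ℤ)) (h : pi2 γ = 1) :
    (χ γ : ℂ) = 1 := by
  rw [chi_eq χ hS hT, h]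
  norm_num

lemma toGL_mul (a b : SL(2,ℤ)) : toGL (a * b) = toGL a * toGL b := by
  simp [toGL, _root_.map_mul]

lemma toGL_one : toGL 1 = 1 := by
  simp [toGL, _root_.map_one]

/-- for `k` even positive, `χ` the character with `χ(S) = χ(T) = -1`,
`f : ℍ → ℂ` any function and `g(τ) = f(2τ)`: `f∣[k]γ = χ(γ)·f` for all `γ ∈ SL(2,ℤ)` iff
`g` is slash-invariant under `Γ₀(4)` and satisfies `g∣[k]W₄ = -g` and `g∣[k]T_{1/2} = -g`. -/
theorem slash_char_iff_Gamma0_four (k : ℤ) (hk : 0 < k) (hke : Even k)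
    (χ : SL(2, ℤ) →* ℂˣ) (hS : (χ ModularGroup.S : ℂ) = -1) (hT : (χ ModularGroup.T : ℂ) = -1)
    (f : ℍ → ℂ) (g : ℍ → ℂ) (hg : ∀ τ : ℍ, g τ = f (double τ)) :
    (∀ γ : SL(2, ℤ), wtSlash k (toGL γ) f = (χ γ : ℂ) • f) ↔
      ((∀ γ : SL(2, ℤ), γ ∈ Gamma0 4 → wtSlash k (toGL γ) g = g) ∧
        wtSlash k W4 g = -g ∧ wtSlash k Thalf g = -g) := by
  set c0 : ℂ := (((2:ℝ) ^ ((k:ℝ)/2) : ℝ) : ℂ) with hc0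
  have hc0ne : c0 ≠ 0 := by
    simp only [hc0, ne_eq, Complex.ofReal_eq_zero]
    exact (Real.rpow_pos_of_pos two_pos _).ne'
  have hgf : (fun τ => f (double τ)) = g := funext fun τ => (hg τ).symm
  have hD : wtSlash k Dmat f = c0 • g := by rw [wtSlash_Dmat, hgf]
  have cancel : ∀ u v : ℍ → ℂ, c0 • u = c0 • v → u = v := by
    intro u v h
    funext τ
    have h2 := congrFun h τ
    simp only [Pi.smul_apply, smul_eq_mul] at h2
    exact mul_left_cancel₀ hc0ne h2
  have keyS : c0 • wtSlash k W4 g = wtSlash k Dmat (wtSlash k (toGL ModularGroup.S) f) := by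
    rw [← wtSlash_smul, ← hD, ← wtSlash_mul, rel_W4, wtSlash_mul, wtSlash_twoI, wtSlash_mul]
  have keyT : c0 • wtSlash k Thalf g = wtSlash k Dmat (wtSlash k (toGL ModularGroup.T) f) := by
    rw [← wtSlash_smul, ← hD, ← wtSlash_mul, rel_Thalf, wtSlash_mul]
  constructor
  · intro H
    refine ⟨?_, ?_, ?_⟩
    · intro γ hγ
      obtain ⟨m, hm⟩ := (ZMod.intCast_zmod_eq_zero_iff_dvd _ 4).mp ((Gamma0_mem).mp hγ)
      have hdet : γ 0 0 * γ 1 1 - γ 0 1 * γ 1 0 = 1 := by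
        have := γ.prop
        rwa [Matrix.det_fin_two] at this
      set γ' : SL(2,ℤ) := ⟨!![γ 0 0, 2 * γ 0 1; 2*m, γ 1 1], by
        rw [Matrix.det_fin_two_of]
        linear_combination hdet + γ 0 1 * hm⟩ with hγ'
      have hrel : Dmat * toGL γ = toGL γ' * Dmat := by
        apply GLPos_ext
        simp only [Units.val_mul, Subgroup.coe_mul, coe_toGL, Dmat, coe_mkGLPos]
        ext i j
        fin_cases i <;> fin_cases j <;>
          · simp [Matrix.mul_apply, Fin.sum_univ_succ, Matrix.map_apply, hγ', hm]
            try push_cast [hm]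
            try ring
      have had : ((γ 0 0 : ZMod 2)) = 1 ∧ ((γ 1 1 : ZMod 2)) = 1 := by
        have hint : γ 0 0 * γ 1 1 = 1 + γ 0 1 * (4 * m) := by
          linear_combination hdet + γ 0 1 * hm
        have h2 := congrArg (Int.cast : ℤ → ZMod 2) hint
        push_cast at h2
        have hxy : ∀ x y b m' : ZMod 2, x * y = 1 + b * (4 * m') → x = 1 ∧ y = 1 := by decide
        exact hxy _ _ _ _ h2
      have hpi : pi2 γ' = 1 := by
        apply Subtype.ext
        have hcoe : ((pi2 γ' : Matrix.SpecialLinearGroup (Fin 2) (ZMod 2)) :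
            Matrix (Fin 2) (Fin 2) (ZMod 2))
            = ((γ' : Matrix (Fin 2) (Fin 2) ℤ)).map (Int.cast : ℤ → ZMod 2) := rfl
        rw [hcoe]
        ext i j
        fin_cases i <;> fin_cases j <;>
          simp [hγ', Matrix.map_apply, had.1, had.2] <;>
          exact Or.inl (by decide)
      have hχ1 : (χ γ' : ℂ) = 1 := chi_one_of_mod2 χ hS hT γ' hpi
      apply cancel
      calc c0 • wtSlash k (toGL γ) g
          = wtSlash k (toGL γ) (c0 • g) := (wtSlash_smul _ _ _ _).symm
        _ = wtSlash k (toGL γ) (wtSlash k Dmat f) := by rw [hD]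
        _ = wtSlash k (Dmat * toGL γ) f := (wtSlash_mul _ _ _ _).symm
        _ = wtSlash k (toGL γ' * Dmat) f := by rw [hrel]
        _ = wtSlash k Dmat (wtSlash k (toGL γ') f) := wtSlash_mul _ _ _ _
        _ = wtSlash k Dmat ((χ γ' : ℂ) • f) := by rw [H γ']
        _ = (χ γ' : ℂ) • wtSlash k Dmat f := wtSlash_smul _ _ _ _
        _ = c0 • g := by rw [hχ1, one_smul, hD]
    · apply cancel
      rw [keyS, H ModularGroup.S, wtSlash_smul, hS, hD]
      rw [smul_neg, neg_one_smul]
    · apply cancel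
      rw [keyT, H ModularGroup.T, wtSlash_smul, hT, hD]
      rw [smul_neg, neg_one_smul]
  · rintro ⟨h0, hW, hTh⟩
    have hfS : wtSlash k (toGL ModularGroup.S) f = ((χ ModularGroup.S : ℂ)) • f := by
      apply wtSlash_injective k Dmat
      rw [← keyS, hW, wtSlash_smul, hS, hD, smul_neg, neg_one_smul]
    have hfT : wtSlash k (toGL ModularGroup.T) f = ((χ ModularGroup.T : ℂ)) • f := by
      apply wtSlash_injective k Dmat
      rw [← keyT, hTh, wtSlash_smul, hT, hD, smul_neg, neg_one_smul]
    set K : Subgroup SL(2,ℤ) :=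
      { carrier := {γ : SL(2,ℤ) | wtSlash k (toGL γ) f = (χ γ : ℂ) • f}
        one_mem' := by
          simp only [Set.mem_setOf_eq, toGL_one, wtSlash_one, _root_.map_one,
            Units.val_one, one_smul]
        mul_mem' := by
          intro a b ha hb
          simp only [Set.mem_setOf_eq] at *
          rw [toGL_mul, wtSlash_mul, ha, wtSlash_smul, hb, smul_smul, ← Units.val_mul,
            ← _root_.map_mul]
        inv_mem' := by
          intro a ha
          simp only [Set.mem_setOf_eq] at *
          have h1 : f = wtSlash k (toGL a⁻¹) (wtSlash k (toGL a) f) := by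
            rw [← wtSlash_mul, ← toGL_mul, mul_inv_cancel, toGL_one, wtSlash_one]
          rw [ha, wtSlash_smul] at h1
          have h2 : wtSlash k (toGL a⁻¹) f = (χ a : ℂ)⁻¹ • f := by
            calc wtSlash k (toGL a⁻¹) f
                = (χ a : ℂ)⁻¹ • ((χ a : ℂ) • wtSlash k (toGL a⁻¹) f) := by
                  rw [smul_smul, inv_mul_cancel₀ (Units.ne_zero (χ a)), one_smul]
              _ = (χ a : ℂ)⁻¹ • f := by rw [← h1]
          rw [h2, map_inv]
          congr 1
          exact (Units.val_inv_eq_inv_val (χ a)).symm } with hKdef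
    intro γ
    have hle : Subgroup.closure ({ModularGroup.S, ModularGroup.T} : Set SL(2,ℤ)) ≤ K := by
      rw [Subgroup.closure_le]
      rintro x (rfl | rfl)
      exacts [hfS, hfT]
    exact hle (by rw [closure_S_T]; trivial)

end
end

section
/- Let k be an even integer, let ε ∈ {1, -1}, and let f : ℍ → ℂ be a function satisfying f∣[k]S = ε·f and f∣[k]T = -ε·f. Then f is identically zero. -/
open UpperHalfPlane Matrix MatrixGroups CongruenceSubgroup

noncomputable section

open ModularForm in
set_option synthInstance.maxHeartbeats 400000 in
lemma wtSlash_eq_SL_slash (k : ℤ) (γ : SL(2, ℤ)) (f : ℍ → ℂ) :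
    wtSlash k (toGL γ) f = f ∣[k] γ := by
  funext τ
  have hcoe : toGL γ = (γ : GL(2, ℝ)⁺) := rfl
  rw [SL_slash_apply, wtSlash, hcoe]
  have hd : (((γ : GL(2, ℝ)⁺) : GL (Fin 2) ℝ) : Matrix (Fin 2) (Fin 2) ℝ).det = 1 :=
    (SpecialLinearGroup.map (Int.castRingHom ℝ) γ).2
  rw [hd]
  norm_num
  rw [mul_comm]; rfl

open ModularForm in
set_option synthInstance.maxHeartbeats 400000 in
lemma slash_neg_one_of_even (k : ℤ) (hke : Even k) (f : ℍ → ℂ) :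
    f ∣[k] (-1 : SL(2, ℤ)) = f := by
  funext τ
  rw [SL_slash_apply]
  have hsm : ((-1 : SL(2, ℤ))) • τ = τ := by
    have h := ModularGroup.SL_neg_smul (1 : SL(2, ℤ)) τ
    rw [h, one_smul]
  have hden : denom ((-1 : SL(2, ℤ))) τ = -1 := by simp [denom]
  rw [hsm, hden]
  obtain ⟨m, rfl⟩ := hke
  have : ((-1 : ℂ)) ^ (-(m + m)) = 1 := by
    rw [_root_.zpow_neg, ← two_mul, _root_.zpow_mul]
    norm_num
  rw [this]; ring

lemma ST_cube : (ModularGroup.S * ModularGroup.T) ^ 3 = (-1 : SL(2, ℤ)) := by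
  ext i j
  fin_cases i <;> fin_cases j <;>
    simp [ModularGroup.coe_S, ModularGroup.coe_T, pow_succ, Matrix.mul_apply, Fin.sum_univ_succ, Matrix.SpecialLinearGroup.coe_mul]

open ModularForm

/-- if `k` is even, `ε ∈ {1,-1}`, and `f : ℍ → ℂ` satisfies `f∣[k]S = ε·f`
and `f∣[k]T = -ε·f`, then `f = 0`. -/
theorem eq_zero_of_slash_S_T_opposite_signs (k : ℤ) (hke : Even k) (ε : ℂ)
    (hε : ε = 1 ∨ ε = -1) (f : ℍ → ℂ)
    (hS : wtSlash k (toGL ModularGroup.S) f = ε • f)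
    (hT : wtSlash k (toGL ModularGroup.T) f = -(ε • f)) :
    f = 0 := by
  rw [wtSlash_eq_SL_slash] at hS hT
  have hε2 : ε * ε = 1 := by rcases hε with rfl | rfl <;> ring
  have hST : f ∣[k] (ModularGroup.S * ModularGroup.T) = -f := by
    rw [SlashAction.slash_mul, hS, SL_smul_slash, hT]
    funext τ
    simp only [Pi.smul_apply, Pi.neg_apply, smul_eq_mul]
    linear_combination (-(f τ)) * hε2
  have h3 : f ∣[k] ((ModularGroup.S * ModularGroup.T) ^ 3) = -f := by
    have : ((ModularGroup.S * ModularGroup.T) ^ 3)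
        = (ModularGroup.S * ModularGroup.T) * (ModularGroup.S * ModularGroup.T)
          * (ModularGroup.S * ModularGroup.T) := by
        rw [pow_succ, pow_succ, pow_one]
    rw [this]
    simp only [SlashAction.slash_mul, hST, SlashAction.neg_slash, neg_neg]
  rw [ST_cube, slash_neg_one_of_even k hke] at h3
  funext τ
  have := congrFun h3 τ
  simp only [Pi.neg_apply] at this
  have h2 : (2 : ℂ) * f τ = 0 := by linear_combination this
  simpa using h2

end
end

section
/- Let k be an even positive integer and let g be a cusp form of weight k for Γ₀(4) satisfying g∣[k]W₄ = -g. Then for every s ∈ ℂ the function y ↦ g(iy)·y^{s-1} is integrable on (0,∞), and the completed L-function Λ(s) := 2^s ∫₀^∞ g(iy) y^{s-1} dy satisfies the functional equation Λ(s) = -i^k Λ(k-s) for all s ∈ ℂ. -/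
open UpperHalfPlane Matrix MatrixGroups CongruenceSubgroup

noncomputable section

/-- The value `g(iy)` of a function on the upper half-plane, extended by `0` for `y ≤ 0`. -/
def valI (g : ℍ → ℂ) (y : ℝ) : ℂ :=
  if hy : 0 < y then g ⟨Complex.I * y, by simpa using hy⟩ else 0

/-- The completed L-function `Λ(s) = 2^s ∫₀^∞ g(iy) y^{s-1} dy` of `g`. -/
def completedL (g : ℍ → ℂ) (s : ℂ) : ℂ :=
  (2 : ℂ) ^ s * ∫ y in Set.Ioi (0 : ℝ), valI g y * (y : ℂ) ^ (s - 1)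

set_option synthInstance.maxHeartbeats 1000000
set_option maxHeartbeats 1000000

lemma W4_entries : (((W4 : GL (Fin 2) ℝ)) : Matrix (Fin 2) (Fin 2) ℝ) = !![0,-1;4,0] := rfl

lemma denom_W4 (z : ℍ) : UpperHalfPlane.denom W4 z = 4 * z := by
  simp [UpperHalfPlane.denom, W4_entries]

lemma num_W4 (z : ℍ) : UpperHalfPlane.num W4 z = -1 := by
  simp [UpperHalfPlane.num, W4_entries]

lemma coe_W4_smul (z : ℍ) : ((W4 • z : ℍ) : ℂ) = -1 / (4 * z) := by
  rw [show ((W4 • z : ℍ) : ℂ) = (((W4 : GL (Fin 2) ℝ) • z : ℍ) : ℂ) from rfl,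
    UpperHalfPlane.coe_smul_of_det_pos (by rw [Matrix.GeneralLinearGroup.val_det_apply, W4_entries]; norm_num [Matrix.det_fin_two_of]),
    denom_W4, num_W4]

lemma det_W4 : (((W4 : GL (Fin 2) ℝ)) : Matrix (Fin 2) (Fin 2) ℝ).det = 4 := by
  rw [W4_entries]; norm_num [Matrix.det_fin_two_of]

open Complex in
lemma key_rel (k : ℤ) (g : CuspForm (Gamma0 4) k) (hW : wtSlash k W4 ⇑g = -⇑g)
    {y : ℝ} (hy : 0 < y) :
    valI ⇑g (1/(4*y)) = -((2:ℂ)^k * Complex.I^k * (y:ℂ)^k) * valI ⇑g y := by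
  have hy' : (y:ℂ) ≠ 0 := Complex.ofReal_ne_zero.mpr hy.ne'
  set τ : ℍ := ⟨Complex.I * y, by simpa using hy⟩ with hτ
  have h0 := congrFun hW τ
  have hdet : ((((W4 : GL (Fin 2) ℝ) : Matrix (Fin 2) (Fin 2) ℝ).det ^ ((k : ℝ) / 2) : ℝ) : ℂ)
      = (2:ℂ)^k := by
    rw [det_W4]
    rw [show (4:ℝ) = (2:ℝ)^(2:ℝ) by norm_num [Real.rpow_natCast]]
    rw [← Real.rpow_mul (by norm_num)]
    rw [show (2:ℝ) * ((k:ℝ)/2) = (k:ℝ) by ring, Real.rpow_intCast]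
    push_cast
    ring
  have hpt : W4 • τ = (⟨Complex.I * ((1/(4*y) : ℝ) : ℂ), by simpa using by positivity⟩ : ℍ) := by
    apply UpperHalfPlane.ext
    rw [coe_W4_smul]
    push_cast
    have : (τ : ℂ) = Complex.I * y := rfl
    rw [this]
    field_simp
    ring_nf
    simp [Complex.I_sq]
  have hW4τ : (⇑g) (W4 • τ) = valI ⇑g (1/(4*y)) := by
    rw [hpt, valI, dif_pos (by positivity)]
  have hτv : (⇑g) τ = valI ⇑g y := by rw [valI, dif_pos hy]
  rw [wtSlash, hdet, denom_W4, hW4τ] at h0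
  have hτc : (τ : ℂ) = Complex.I * y := rfl
  simp only [Pi.neg_apply] at h0
  rw [hτc, hτv] at h0
  -- h0 : 2^k * (4*(I*y))^(-k) * valI g (1/(4y)) = -valI g y
  have h4 : (4 * (Complex.I * (y:ℂ))) ≠ 0 := by
    simp [Complex.I_ne_zero, hy']
  have hzp : ((4:ℂ) * (Complex.I * y))^(-k) = ((4 * (Complex.I * (y:ℂ)))^k)⁻¹ := zpow_neg _ _
  have hexp : ((4:ℂ) * (Complex.I * y))^k
      = (2:ℂ)^k * ((2:ℂ)^k * Complex.I^k * (y:ℂ)^k) := by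
    rw [show (4:ℂ) * (Complex.I * y) = 2*(2*(Complex.I*(y:ℂ))) by ring,
      mul_zpow, mul_zpow, mul_zpow]
    ring
  have h2k : ((2:ℂ)^k) ≠ 0 := zpow_ne_zero _ two_ne_zero
  have hck : ((4 * (Complex.I * (y:ℂ)))^k) ≠ 0 := zpow_ne_zero _ h4
  rw [hzp, hexp] at h0
  rw [hexp] at hck
  have hX := right_ne_zero_of_mul hck
  rw [mul_inv, mul_inv_cancel_left₀ h2k, inv_mul_eq_iff_eq_mul₀ hX] at h0
  have h1 : (2:ℂ)^k * valI ⇑g (1/(4*y))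
      = (2:ℂ)^k * (-((2:ℂ)^k * Complex.I^k * (y:ℂ)^k) * valI ⇑g y) := by
    linear_combination (2:ℂ)^k * h0
  exact mul_left_cancel₀ h2k h1

lemma Gamma4_le : Gamma 4 ≤ Gamma0 4 := by
  intro A hA
  rw [Gamma0_mem]
  exact (Gamma_mem.mp hA).2.2.1

/-- restriction of a cusp form to a smaller level -/
def restrict4 (k : ℤ) (g : CuspForm (Gamma0 4) k) : CuspForm (Gamma 4) k where
  toFun := ⇑g
  slash_action_eq' := fun γ hγ => g.slash_action_eq' γ (Subgroup.map_mono Gamma4_le hγ)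
  holo' := g.holo'
  zero_at_cusps' hc := g.zero_at_cusps' (hc.mono (Subgroup.map_mono Gamma4_le))

lemma cont_valI (k : ℤ) (g : CuspForm (Gamma0 4) k) :
    ContinuousOn (valI ⇑g) (Set.Ioi 0) := by
  rw [continuousOn_iff_continuous_restrict]
  have : (Set.Ioi (0:ℝ)).domRestrict (valI ⇑g)
      = ⇑g ∘ (fun y : Set.Ioi (0:ℝ) =>
        (⟨Complex.I * y, show 0 < (Complex.I * ((y:ℝ):ℂ)).im by simpa using Set.mem_Ioi.mp y.2⟩ : ℍ)) := by
    funext y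
    have hy : (0:ℝ) < (y:ℝ) := y.2
    simp only [Set.domRestrict_apply, Function.comp_apply, valI, dif_pos hy]
  rw [this]
  refine (g.holo'.continuous).comp ?_
  exact Continuous.upperHalfPlaneMk (continuous_const.mul (Complex.continuous_ofReal.comp continuous_subtype_val)) _

open Real in
lemma decay_valI (k : ℤ) (g : CuspForm (Gamma0 4) k) :
    ∃ C : ℝ, 0 ≤ C ∧ ∀ y : ℝ, 1/4 ≤ y →
      ‖valI ⇑g y‖ ≤ C * Real.exp (-(π/2) * y) := by
  have hO := CuspFormClass.exp_decay_atImInfty (h := 4) (restrict4 k g) (by norm_num)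
    (by rw [strictPeriods_Gamma]; simpa using AddSubgroup.mem_zmultiples ((4:ℕ):ℝ))
  obtain ⟨c, hc⟩ := hO.bound
  rw [Filter.eventually_iff, UpperHalfPlane.atImInfty_mem] at hc
  obtain ⟨A, hA⟩ := hc
  set A' := max A (1/4 : ℝ) with hA'
  obtain ⟨M, hM⟩ := (isCompact_Icc (a := (1/4:ℝ)) (b := A')).exists_bound_of_continuousOn
    ((cont_valI k g).mono (fun x hx => lt_of_lt_of_le (by norm_num) hx.1))
  have hM0 : 0 ≤ M := le_trans (norm_nonneg _) (hM (1/4) ⟨le_refl _, le_max_right _ _⟩)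
  refine ⟨max (M * Real.exp ((π/2) * A')) (max c 0),
    le_max_of_le_right (le_max_right _ _), ?_⟩
  intro y hy
  have hy0 : (0:ℝ) < y := lt_of_lt_of_le (by norm_num) hy
  have hexp0 : (0:ℝ) ≤ Real.exp (-(π/2) * y) := (Real.exp_pos _).le
  rcases le_total y A' with h | h
  · have h1 : ‖valI ⇑g y‖ ≤ M := hM y ⟨hy, h⟩
    have h2 : M ≤ (M * Real.exp ((π/2) * A')) * Real.exp (-(π/2) * y) := by
      rw [mul_assoc, ← Real.exp_add]
      have hge : (1:ℝ) ≤ Real.exp ((π/2) * A' + -(π/2) * y) := by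
        apply Real.one_le_exp
        nlinarith [Real.pi_pos]
      nlinarith
    exact le_trans h1 (le_trans h2 (mul_le_mul_of_nonneg_right (le_max_left _ _) hexp0))
  · set τ : ℍ := ⟨Complex.I * y, by simpa using hy0⟩ with hτ
    have him : UpperHalfPlane.im τ = y := by simp [hτ, UpperHalfPlane.im]
    have h3 := hA τ (by rw [him]; exact le_trans (le_max_left _ _) h)
    simp only [Set.mem_setOf_eq] at h3
    have hval : valI ⇑g y = g τ := by rw [valI, dif_pos hy0]
    have hcoe : (restrict4 k g) τ = g τ := rfl
    rw [hcoe, him] at h3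
    have : ‖Real.exp (-2 * π * y / 4)‖ = Real.exp (-(π/2) * y) := by
      rw [Real.norm_eq_abs, abs_of_pos (Real.exp_pos _)]
      ring_nf
    rw [hval]
    calc ‖g τ‖ ≤ c * ‖Real.exp (-2 * π * y / 4)‖ := h3
      _ = c * Real.exp (-(π/2) * y) := by rw [this]
      _ ≤ max (M * Real.exp ((π/2) * A')) (max c 0) * Real.exp (-(π/2) * y) := by
          apply mul_le_mul_of_nonneg_right (le_trans (le_max_left c 0) (le_max_right _ _)) hexp0

lemma pow_le_factorial_mul_exp {x : ℝ} (hx : 0 ≤ x) (n : ℕ) :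
    x ^ n ≤ (Nat.factorial n) * Real.exp x := by
  have h := Real.sum_le_exp_of_nonneg hx (n+1)
  have h2 : x^n / (Nat.factorial n) ≤ ∑ i ∈ Finset.range (n+1), x^i / (Nat.factorial i) :=
    Finset.single_le_sum (f := fun i => x^i / (Nat.factorial i)) (fun i _ => by positivity)
      (Finset.self_mem_range_succ n)
  have hn : (0:ℝ) < ((Nat.factorial n) : ℝ) := by positivity
  have h3 : x^n / (Nat.factorial n) ≤ Real.exp x := le_trans h2 h
  calc x ^ n = (x^n / (Nat.factorial n)) * (Nat.factorial n) := by field_simp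
    _ ≤ Real.exp x * (Nat.factorial n) := by nlinarith
    _ = (Nat.factorial n) * Real.exp x := by ring

lemma exp_neg_le {t : ℝ} (ht : 0 < t) (n : ℕ) :
    Real.exp (-t) ≤ (Nat.factorial n) / t ^ n := by
  rw [Real.exp_neg]
  rw [inv_le_iff_one_le_mul₀ (Real.exp_pos t), div_mul_eq_mul_div, le_div_iff₀ (by positivity)]
  have := pow_le_factorial_mul_exp ht.le n
  nlinarith [Real.exp_pos t]

lemma key_rel' (k : ℤ) (g : CuspForm (Gamma0 4) k) (hW : wtSlash k W4 ⇑g = -⇑g)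
    {y : ℝ} (hy : 0 < y) :
    valI ⇑g y = -((2:ℂ)^k * Complex.I^k * (((1/(4*y) : ℝ)):ℂ)^k) * valI ⇑g (1/(4*y)) := by
  have h := key_rel k g hW (y := 1/(4*y)) (by positivity)
  rw [show 1/(4*(1/(4*y))) = y by field_simp] at h
  exact h

open Real in
lemma bounded_small (k : ℤ) (g : CuspForm (Gamma0 4) k) (hW : wtSlash k W4 ⇑g = -⇑g)
    (s : ℂ) :
    ∃ K : ℝ, ∀ y ∈ Set.Ioc (0:ℝ) 1, ‖valI ⇑g y * (y:ℂ)^(s-1)‖ ≤ K := by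
  obtain ⟨C, hC0, hC⟩ := decay_valI k g
  set r := (s-1).re with hr
  set N := ⌈(k:ℝ) - r⌉₊ with hN
  have hπ := Real.pi_pos
  refine ⟨(2:ℝ)^k * (4:ℝ)^(-k) * (C * ((Nat.factorial N) * (8/π)^N)), ?_⟩
  rintro y ⟨hy0, hy1⟩
  have h4y : (0:ℝ) < 4*y := by linarith
  have hnorm : ‖valI ⇑g y * (y:ℂ)^(s-1)‖ = ‖valI ⇑g y‖ * y ^ r := by
    rw [norm_mul]
    congr 1
    rw [Complex.norm_cpow_eq_rpow_re_of_pos hy0]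
  have hrel := key_rel' k g hW hy0
  have hnv : ‖valI ⇑g y‖ = (2:ℝ)^k * (1/(4*y))^k * ‖valI ⇑g (1/(4*y))‖ := by
    rw [hrel, norm_mul, norm_neg, norm_mul, norm_mul, norm_zpow, norm_zpow, norm_zpow]
    simp only [Complex.norm_real, Real.norm_eq_abs, Complex.norm_I, Complex.norm_two,
      _root_.one_zpow, mul_one]
    rw [abs_of_pos (show (0:ℝ) < 1/(4*y) by positivity)]
  have hdec : ‖valI ⇑g (1/(4*y))‖ ≤ C * Real.exp (-(π/2) * (1/(4*y))) := by
    apply hC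
    rw [div_le_div_iff₀ (by norm_num) h4y]
    nlinarith
  have hexp : Real.exp (-(π/2) * (1/(4*y))) ≤ (Nat.factorial N) * ((8/π)^N * y^N) := by
    have ht : 0 < π/(8*y) := by positivity
    have h1 := exp_neg_le ht N
    rw [show -(π/2) * (1/(4*y)) = -(π/(8*y)) by ring]
    refine h1.trans (le_of_eq ?_)
    rw [div_pow]
    rw [div_div_eq_mul_div, div_eq_iff (by positivity : (π:ℝ)^N ≠ 0), div_pow,
      mul_pow]
    field_simp
  have hy_r : y^(-k) * ((y:ℝ)^N * y^r) ≤ 1 := by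
    have e1 : (y:ℝ)^(-k) = y ^ ((-k : ℤ) : ℝ) := (Real.rpow_intCast y (-k)).symm
    have e2 : (y:ℝ)^N = y ^ ((N : ℕ) : ℝ) := (Real.rpow_natCast y N).symm
    rw [e1, e2, ← Real.rpow_add hy0, ← Real.rpow_add hy0]
    apply Real.rpow_le_one hy0.le hy1
    have := Nat.le_ceil ((k:ℝ) - r)
    push_cast
    push_cast at this
    linarith
  have hpos2 : (0:ℝ) < (2:ℝ)^k := zpow_pos (by norm_num) _
  have hpos4 : (0:ℝ) < (4:ℝ)^(-k) := zpow_pos (by norm_num) _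
  have hposy : (0:ℝ) < (1/(4*y))^k := zpow_pos (by positivity) _
  have hfac : (0:ℝ) ≤ (Nat.factorial N : ℝ) * (8/π)^N := by positivity
  have hrpos : (0:ℝ) ≤ y ^ r := Real.rpow_nonneg hy0.le _
  calc ‖valI ⇑g y * (y:ℂ)^(s-1)‖ = ‖valI ⇑g y‖ * y ^ r := hnorm
    _ ≤ ((2:ℝ)^k * (1/(4*y))^k * (C * ((Nat.factorial N) * ((8/π)^N * y^N)))) * y ^ r := by
        rw [hnv]
        apply mul_le_mul_of_nonneg_right _ hrpos
        apply mul_le_mul_of_nonneg_left _ (by positivity)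
        exact le_trans hdec (mul_le_mul_of_nonneg_left hexp hC0)
    _ = ((2:ℝ)^k * (4:ℝ)^(-k) * (C * ((Nat.factorial N) * (8/π)^N)))
          * (y^(-k) * ((y:ℝ)^N * y^r)) := by
        rw [show (1/(4*y) : ℝ) = (4*y)⁻¹ by rw [one_div], _root_.inv_zpow, ← _root_.zpow_neg, mul_zpow]
        ring
    _ ≤ ((2:ℝ)^k * (4:ℝ)^(-k) * (C * ((Nat.factorial N) * (8/π)^N))) * 1 := by
        apply mul_le_mul_of_nonneg_left hy_r (by positivity)
    _ = (2:ℝ)^k * (4:ℝ)^(-k) * (C * ((Nat.factorial N) * (8/π)^N)) := mul_one _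

open Real MeasureTheory in
lemma integrable_F (k : ℤ) (g : CuspForm (Gamma0 4) k) (hW : wtSlash k W4 ⇑g = -⇑g)
    (s : ℂ) :
    MeasureTheory.IntegrableOn
      (fun y : ℝ => valI (⇑g) y * (y : ℂ) ^ (s - 1)) (Set.Ioi 0) := by
  have hπ := Real.pi_pos
  set F := fun y : ℝ => valI (⇑g) y * (y:ℂ)^(s-1) with hF
  set r := (s-1).re with hr
  have hnormF : ∀ y : ℝ, 0 < y → ‖F y‖ = ‖valI ⇑g y‖ * y ^ r := by
    intro y hy
    rw [hF, norm_mul]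
    congr 1
    rw [Complex.norm_cpow_eq_rpow_re_of_pos hy]
  have hcontF : ContinuousOn F (Set.Ioi 0) := by
    apply (cont_valI k g).mul
    apply Complex.continuous_ofReal.continuousOn.cpow_const
    intro y hy
    exact Complex.ofReal_mem_slitPlane.mpr hy
  have hmeas : AEStronglyMeasurable F (volume.restrict (Set.Ioi 0)) :=
    hcontF.aestronglyMeasurable measurableSet_Ioi
  have hsplit : Set.Ioi (0:ℝ) = Set.Ioc 0 1 ∪ Set.Ioi 1 :=
    (Set.Ioc_union_Ioi_eq_Ioi (by norm_num)).symm
  rw [hsplit]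
  apply MeasureTheory.IntegrableOn.union
  · obtain ⟨K, hK⟩ := bounded_small k g hW s
    exact MeasureTheory.Integrable.mono'
      (MeasureTheory.integrableOn_const measure_Ioc_lt_top.ne)
      (hmeas.mono_measure (Measure.restrict_mono Set.Ioc_subset_Ioi_self le_rfl))
      ((MeasureTheory.ae_restrict_iff' measurableSet_Ioc).mpr (Filter.Eventually.of_forall hK))
  · obtain ⟨C, hC0, hC⟩ := decay_valI k g
    set M := ⌈r⌉₊ with hM
    refine MeasureTheory.Integrable.mono'
      (((exp_neg_integrableOn_Ioi 1 (by norm_num : (0:ℝ) < 1/2)).const_mul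
        (C * (Nat.factorial M))))
      (hmeas.mono_measure (Measure.restrict_mono (Set.Ioi_subset_Ioi (by norm_num)) le_rfl))
      ((MeasureTheory.ae_restrict_iff' measurableSet_Ioi).mpr (Filter.Eventually.of_forall ?_))
    intro y hy
    have hy1 : (1:ℝ) < y := hy
    have hy0 : (0:ℝ) < y := lt_trans one_pos hy1
    have h1 : ‖valI ⇑g y‖ ≤ C * Real.exp (-(π/2) * y) := hC y (by linarith)
    have h2 : y ^ r ≤ y ^ (M:ℕ) := by
      rw [← Real.rpow_natCast y M]
      exact Real.rpow_le_rpow_of_exponent_le hy1.le (Nat.le_ceil r)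
    have h3 : y ^ (M:ℕ) ≤ (Nat.factorial M) * Real.exp y :=
      pow_le_factorial_mul_exp hy0.le M
    have h4 : Real.exp (-(π/2) * y) * ((Nat.factorial M) * Real.exp y)
        ≤ (Nat.factorial M) * Real.exp (-(1/2) * y) := by
      rw [mul_comm, mul_assoc, ← Real.exp_add]
      apply mul_le_mul_of_nonneg_left _ (by positivity)
      apply Real.exp_le_exp.mpr
      nlinarith [Real.pi_gt_three]
    calc ‖F y‖ = ‖valI ⇑g y‖ * y ^ r := hnormF y hy0
      _ ≤ (C * Real.exp (-(π/2) * y)) * ((Nat.factorial M) * Real.exp y) := by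
          apply mul_le_mul h1 (le_trans h2 h3) (Real.rpow_nonneg hy0.le _)
            (by positivity)
      _ = C * (Real.exp (-(π/2) * y) * ((Nat.factorial M) * Real.exp y)) := by ring
      _ ≤ C * ((Nat.factorial M) * Real.exp (-(1/2) * y)) :=
          mul_le_mul_of_nonneg_left h4 hC0
      _ = C * (Nat.factorial M) * Real.exp (-(1/2) * y) := by ring

open MeasureTheory Complex in
lemma FE_aux (k : ℤ) (hke : Even k) (g : CuspForm (Gamma0 4) k)
    (hW : wtSlash k W4 ⇑g = -⇑g) (s : ℂ) :
    completedL ⇑g s = -(Complex.I ^ k) * completedL ⇑g ((k : ℂ) - s) := by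
  set F := fun y : ℝ => valI ⇑g y * (y:ℂ)^(s-1) with hF
  set w := (k:ℂ) - s - 1 with hw
  set G := fun u : ℝ => valI ⇑g u * (u:ℂ)^w with hG
  set c : ℂ := -((2:ℂ)^k * Complex.I^k * (4:ℂ)^(s - (k:ℂ) - 1)) with hc
  set H := fun x : ℝ => (|(-1:ℝ)| * x ^ ((-1:ℝ) - 1)) • G (x ^ (-1:ℝ)) with hH
  have h4 : ((4:ℝ):ℂ) = (4:ℂ) := by norm_num
  have hA : ∫ u in Set.Ioi (0:ℝ), G u = ∫ x in Set.Ioi (0:ℝ), H x :=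
    (MeasureTheory.integral_comp_rpow_Ioi G (by norm_num : (-1:ℝ) ≠ 0)).symm
  have hB : ∫ x in Set.Ioi (0:ℝ), H (4*x) = (4:ℝ)⁻¹ • ∫ x in Set.Ioi (0:ℝ), H x := by
    simpa using MeasureTheory.integral_comp_mul_left_Ioi H 0 (by norm_num : (0:ℝ) < 4)
  have hC : ∀ y ∈ Set.Ioi (0:ℝ), H (4*y) = c * F y := by
    intro y hy
    have hy0 : (0:ℝ) < y := hy
    have h4y : (0:ℝ) < 4*y := by linarith
    have hyy : ((y:ℝ):ℂ) ≠ 0 := Complex.ofReal_ne_zero.mpr hy0.ne'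
    have h4ne : (4:ℂ) ≠ 0 := by norm_num
    have e1 : (4*y : ℝ) ^ ((-1:ℝ)) = 1/(4*y) := by
      rw [show (-1:ℝ) = ((-1:ℤ):ℝ) by norm_num, Real.rpow_intCast, _root_.zpow_neg_one, one_div]
    have e2 : (|(-1:ℝ)| * (4*y : ℝ) ^ ((-1:ℝ) - 1)) = (4*y)^(-2:ℝ) := by norm_num
    rw [hH]
    simp only []
    rw [e1, e2]
    rw [hG]
    simp only []
    rw [key_rel k g hW hy0]
    -- scalar to mul
    rw [Complex.real_smul]
    rw [Complex.ofReal_cpow h4y.le]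
    have harg : ((4*y:ℝ):ℂ).arg ≠ Real.pi := by
      rw [Complex.arg_ofReal_of_nonneg h4y.le]
      exact Real.pi_ne_zero.symm
    have ecpow : (((1/(4*y) : ℝ)):ℂ)^w = ((4:ℝ):ℂ)^(-w) * ((y:ℝ):ℂ)^(-w) := by
      rw [one_div, Complex.ofReal_inv, Complex.inv_cpow _ _ harg, ← Complex.cpow_neg,
        Complex.ofReal_mul, mul_cpow_ofReal_nonneg (by norm_num) hy0.le]
    rw [ecpow]
    have esc : (((4*y:ℝ)):ℂ)^(((-2:ℝ)):ℂ) = ((4:ℝ):ℂ)^(-2:ℂ) * ((y:ℝ):ℂ)^(-2:ℂ) := by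
      rw [Complex.ofReal_mul, mul_cpow_ofReal_nonneg (by norm_num) hy0.le]
      norm_num
    rw [esc]
    have p4 : ((4:ℝ):ℂ)^(-2:ℂ) * ((4:ℝ):ℂ)^(-w) = (4:ℂ)^(s - (k:ℂ) - 1) := by
      rw [← Complex.cpow_add _ _ (by rw [h4]; norm_num), h4]
      congr 1
      rw [hw]; ring
    have py : ((y:ℝ):ℂ)^(-2:ℂ) * (((y:ℝ):ℂ)^k * ((y:ℝ):ℂ)^(-w)) = ((y:ℝ):ℂ)^(s-1) := by
      rw [show (((y:ℝ):ℂ))^k = ((y:ℝ):ℂ)^((k:ℤ):ℂ) from (Complex.cpow_intCast _ _).symm,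
        ← Complex.cpow_add _ _ hyy, ← Complex.cpow_add _ _ hyy]
      congr 1
      rw [hw]; push_cast; ring
    rw [hF, hc]
    simp only []
    linear_combination (((y:ℝ):ℂ)^(-2:ℂ) * (((y:ℝ):ℂ)^k * ((y:ℝ):ℂ)^(-w))
        * (-((2:ℂ)^k * Complex.I^k)) * valI ⇑g y) * p4
      + ((4:ℂ)^(s - (k:ℂ) - 1) * (-((2:ℂ)^k * Complex.I^k)) * valI ⇑g y) * py
  have hint : ∫ x in Set.Ioi (0:ℝ), H (4*x) = c * ∫ y in Set.Ioi (0:ℝ), F y := by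
    rw [MeasureTheory.setIntegral_congr_fun measurableSet_Ioi hC]
    exact MeasureTheory.integral_const_mul c F
  have hH_int : ∫ x in Set.Ioi (0:ℝ), H x = (4:ℝ) • (c * ∫ y in Set.Ioi (0:ℝ), F y) := by
    rw [← hint, hB, smul_smul]
    norm_num
  -- final assembly
  have hGF : ∫ u in Set.Ioi (0:ℝ), G u = (4:ℂ) * (c * ∫ y in Set.Ioi (0:ℝ), F y) := by
    rw [hA, hH_int, Complex.real_smul, h4]
  have hcoef : (2:ℂ)^s = -(Complex.I^k) * ((2:ℂ)^((k:ℂ)-s) * ((4:ℂ) * c)) := by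
    rw [hc]
    have e4 : (4:ℂ) * (4:ℂ)^(s - (k:ℂ) - 1) = (4:ℂ)^(s - (k:ℂ)) := by
      calc (4:ℂ) * (4:ℂ)^(s - (k:ℂ) - 1) = (4:ℂ)^(1:ℂ) * (4:ℂ)^(s - (k:ℂ) - 1) := by
            rw [Complex.cpow_one]
        _ = (4:ℂ)^((1:ℂ) + (s - (k:ℂ) - 1)) := (Complex.cpow_add _ _ (by norm_num)).symm
        _ = (4:ℂ)^(s - (k:ℂ)) := by congr 1; ring
    have eII : Complex.I^k * Complex.I^k = 1 := by
      rw [← mul_zpow]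
      rw [Complex.I_mul_I]
      exact hke.neg_one_zpow
    have e42 : (4:ℂ)^(s - (k:ℂ)) = (2:ℂ)^(s - (k:ℂ)) * (2:ℂ)^(s - (k:ℂ)) := by
      rw [show (4:ℂ) = ((2:ℝ):ℂ) * ((2:ℝ):ℂ) by norm_num,
        mul_cpow_ofReal_nonneg (by norm_num) (by norm_num)]
      norm_num
    have e2k : (2:ℂ)^k = (2:ℂ)^((k:ℤ):ℂ) := (Complex.cpow_intCast _ _).symm
    have etot : (2:ℂ)^((k:ℂ)-s) * ((2:ℂ)^((k:ℤ):ℂ) * ((2:ℂ)^(s - (k:ℂ)) * (2:ℂ)^(s - (k:ℂ))))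
        = (2:ℂ)^s := by
      rw [← Complex.cpow_add _ _ (two_ne_zero), ← Complex.cpow_add _ _ (two_ne_zero),
        ← Complex.cpow_add _ _ (two_ne_zero)]
      congr 1
      push_cast
      ring
    calc (2:ℂ)^s = (Complex.I^k * Complex.I^k) *
          ((2:ℂ)^((k:ℂ)-s) * ((2:ℂ)^((k:ℤ):ℂ) * ((2:ℂ)^(s-(k:ℂ)) * (2:ℂ)^(s-(k:ℂ))))) := by
          rw [eII, etot, one_mul]
      _ = -(Complex.I^k) * ((2:ℂ)^((k:ℂ)-s) *
          ((4:ℂ) * -((2:ℂ)^k * Complex.I^k * (4:ℂ)^(s - (k:ℂ) - 1)))) := by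
          rw [e2k, ← e42, ← e4]
          ring
  rw [completedL, completedL]
  rw [show (∫ y in Set.Ioi (0:ℝ), valI ⇑g y * (y:ℂ)^(((k:ℂ) - s) - 1)) = ∫ u in Set.Ioi (0:ℝ), G u from rfl]
  rw [hGF]
  rw [show (∫ y in Set.Ioi (0:ℝ), valI ⇑g y * (y:ℂ)^(s - 1)) = ∫ y in Set.Ioi (0:ℝ), F y from rfl]
  linear_combination (∫ y in Set.Ioi (0:ℝ), F y) * hcoef

/-- if `g` is a cusp form of even positive weight `k` for `Γ₀(4)` with
`g∣[k]W₄ = -g`, then for every `s ∈ ℂ` the function `y ↦ g(iy)·y^{s-1}` is integrable on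
`(0,∞)`, and the completed L-function `Λ(s) = 2^s ∫₀^∞ g(iy) y^{s-1} dy` satisfies the
functional equation `Λ(s) = -i^k Λ(k-s)`. -/
theorem completedL_functional_equation (k : ℤ) (hk : 0 < k) (hke : Even k)
    (g : CuspForm (Gamma0 4) k) (hW : wtSlash k W4 ⇑g = -⇑g) :
    (∀ s : ℂ, MeasureTheory.IntegrableOn
        (fun y : ℝ => valI (⇑g) y * (y : ℂ) ^ (s - 1)) (Set.Ioi 0)) ∧
      (∀ s : ℂ, completedL (⇑g) s = -(Complex.I ^ k) * completedL (⇑g) ((k : ℂ) - s)) :=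
  ⟨fun s => integrable_F k g hW s, fun s => FE_aux k hke g hW s⟩

end
end
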